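/- Suppose taking powers by B a preserves Size-indexed colimits for every a : A (so the comparison maps for power diagrams are injective and surjective). Then the polynomial endofunctor S_Σ(X) = Σ_{a:A} (B a → X) preserves Size-indexed colimits: for every diagram (D, δ), the canonical map κ : colim(S_Σ ∘ D) → S_Σ(colim D), sending [i, (a, b)] to (a, (ν_D)_i ∘ b), is an isomorphism. -/

import Mathlib

universe u

/-- A type of sizes: a transitive well-founded relation `<` with a
distinguished element and binary strict upper bounds `⊔ˢ`. -/
structure SizeType : Type (u + 1) where
  S : Type u
  lt : S → S → Prop
  trans : ∀ {i j k : S}, lt i j → lt j k → lt i k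
  wf : ∀ φ : S → Prop, (∀ i, (∀ j, lt j i → φ j) → φ i) → ∀ i, φ i
  zero : S
  sup : S → S → S
  lt_sup_left : ∀ i j, lt i (sup i j)
  lt_sup_right : ∀ i j, lt j (sup i j)

/-- A `Size`-indexed diagram in the universe. -/
structure Diagram (Z : SizeType.{u}) : Type (u + 1) where
  D : Z.S → Type u
  δ : ∀ {i j : Z.S}, Z.lt i j → D i → D j
  comp : ∀ {i j k : Z.S} (hij : Z.lt i j) (hjk : Z.lt j k) (x : D i),
    δ (Z.trans hij hjk) x = δ hjk (δ hij x)

/-- The relation `(i, x) ∼ (j, y)` iff the two elements become equal at some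
common later stage `k`. -/
def simRel (Z : SizeType.{u}) (Dg : Diagram Z) (p q : Σ i : Z.S, Dg.D i) : Prop :=
  ∃ (k : Z.S) (h₁ : Z.lt p.1 k) (h₂ : Z.lt q.1 k), Dg.δ h₁ p.2 = Dg.δ h₂ q.2

/-- The colimit of a `Size`-indexed diagram, as a quotient of `Σ_i D_i`. -/
def Colim (Z : SizeType.{u}) (Dg : Diagram Z) : Type u := Quot (simRel Z Dg)

/-- The cocone maps `(ν_D)_i x = [i, x]` into the colimit. -/
def nu (Z : SizeType.{u}) (Dg : Diagram Z) (i : Z.S) (x : Dg.D i) : Colim Z Dg :=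
  Quot.mk _ ⟨i, x⟩

/-- A signature `Σ = (A, B)`. -/
structure Sig : Type (u + 1) where
  A : Type u
  B : A → Type u

/-- The polynomial endofunctor `S_Σ(X) = Σ_{a:A} (B a → X)`. -/
def SPoly (S : Sig.{u}) (X : Type u) : Type u := Σ a : S.A, S.B a → X

/-- The power diagram `D^X` with `(D^X)_i = X → D_i`. -/
def powerDiagram (Z : SizeType.{u}) (Dg : Diagram Z) (X : Type u) : Diagram Z where
  D := fun i => X → Dg.D i
  δ := fun h f x => Dg.δ h (f x)
  comp := fun hij hjk f => funext fun x => Dg.comp hij hjk (f x)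

/-- The composite diagram `S_Σ ∘ D`. -/
def sigmaDiagram (Z : SizeType.{u}) (S : Sig.{u}) (Dg : Diagram Z) : Diagram Z where
  D := fun i => SPoly S (Dg.D i)
  δ := fun h s => ⟨s.1, fun x => Dg.δ h (s.2 x)⟩
  comp := fun hij hjk s =>
    congrArg (Sigma.mk s.1) (funext fun x => Dg.comp hij hjk (s.2 x))


lemma simRel_equiv (Z : SizeType.{u}) (Dg : Diagram Z) : Equivalence (simRel Z Dg) where
  refl p := ⟨Z.sup p.1 p.1, Z.lt_sup_left _ _, Z.lt_sup_left _ _, rfl⟩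
  symm := by
    rintro p q ⟨k, h₁, h₂, h⟩; exact ⟨k, h₂, h₁, h.symm⟩
  trans := by
    rintro p q r ⟨k, h₁, h₂, h⟩ ⟨k', h₁', h₂', h'⟩
    refine ⟨Z.sup k k', Z.trans h₁ (Z.lt_sup_left _ _), Z.trans h₂' (Z.lt_sup_right _ _), ?_⟩
    exact (Dg.comp h₁ (Z.lt_sup_left k k') p.2).trans
      ((congrArg _ h).trans ((Dg.comp h₂ (Z.lt_sup_left k k') q.2).symm.trans
        ((Dg.comp h₁' (Z.lt_sup_right k k') q.2).trans
          ((congrArg _ h').trans (Dg.comp h₂' (Z.lt_sup_right k k') r.2).symm))))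

lemma colim_exact (Z : SizeType.{u}) (Dg : Diagram Z) {p q : Σ i : Z.S, Dg.D i}
    (h : (Quot.mk (simRel Z Dg) p) = Quot.mk (simRel Z Dg) q) : simRel Z Dg p q := by
  have := Quot.eqvGen_exact h
  rwa [(simRel_equiv Z Dg).eqvGen_eq] at this

/-- if taking powers by each `B a` preserves `Size`-indexed
colimits (the power comparison maps are bijective), then the polynomial
endofunctor `S_Σ` preserves `Size`-indexed colimits: the canonical map
`κ : colim (S_Σ ∘ D) → S_Σ(colim D)`, sending `[i, (a, b)]` to
`(a, (ν_D)_i ∘ b)`, is an isomorphism (a bijection). -/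
theorem poly_endofunctor_cocontinuous (Z : SizeType.{u}) (S : Sig.{u})
    (hpow : ∀ (a : S.A) (Dg : Diagram Z),
      ∃ κ : Colim Z (powerDiagram Z Dg (S.B a)) → (S.B a → Colim Z Dg),
        (∀ (i : Z.S) (f : S.B a → Dg.D i),
          κ (nu Z (powerDiagram Z Dg (S.B a)) i f) = fun x => nu Z Dg i (f x)) ∧
        Function.Bijective κ) :
    ∀ Dg : Diagram Z,
      ∃ κ : Colim Z (sigmaDiagram Z S Dg) → SPoly S (Colim Z Dg),
        (∀ (i : Z.S) (s : SPoly S (Dg.D i)),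
          κ (nu Z (sigmaDiagram Z S Dg) i s) = ⟨s.1, fun x => nu Z Dg i (s.2 x)⟩) ∧
        Function.Bijective κ := by
  intro Dg
  refine ⟨Quot.lift (fun p => ⟨p.2.1, fun x => nu Z Dg p.1 (p.2.2 x)⟩) ?_, fun i s => rfl, ?_, ?_⟩
  · rintro ⟨i, a, b⟩ ⟨j, a', b'⟩ ⟨k, h₁, h₂, h⟩
    have h' : (⟨a, fun x => Dg.δ h₁ (b x)⟩ : SPoly S (Dg.D k)) = ⟨a', fun x => Dg.δ h₂ (b' x)⟩ := h
    have ha : a = a' := congrArg Sigma.fst h'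
    subst ha
    injection h' with _ hb'

    exact congrArg (Sigma.mk a) (funext fun x => Quot.sound ⟨k, h₁, h₂, congrFun hb' x⟩)
  · -- injective
    rintro p q hpq
    induction p using Quot.ind with | _ p =>
    induction q using Quot.ind with | _ q =>
    obtain ⟨i, a, b⟩ := p
    obtain ⟨j, a', b'⟩ := q
    have hpq' : (⟨a, fun x => nu Z Dg i (b x)⟩ : SPoly S (Colim Z Dg)) = ⟨a', fun x => nu Z Dg j (b' x)⟩ := hpq
    have ha : a = a' := congrArg Sigma.fst hpq'
    subst ha
    injection hpq' with _ hb'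

    obtain ⟨κa, hκ, hinj, hsurj⟩ := hpow a Dg
    have : nu Z (powerDiagram Z Dg (S.B a)) i b = nu Z (powerDiagram Z Dg (S.B a)) j b' := by
      apply hinj; rw [hκ, hκ]; exact hb'
    obtain ⟨k, h₁, h₂, h⟩ := colim_exact Z (powerDiagram Z Dg (S.B a)) this
    apply Quot.sound
    exact ⟨k, h₁, h₂, congrArg (Sigma.mk a) h⟩
  · -- surjective
    rintro ⟨a, g⟩
    obtain ⟨κa, hκ, hinj, hsurj⟩ := hpow a Dg
    obtain ⟨c, hc⟩ := hsurj g
    induction c using Quot.ind with | _ p =>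
    obtain ⟨i, f⟩ := p
    refine ⟨nu Z (sigmaDiagram Z S Dg) i ⟨a, f⟩, ?_⟩
    have : κa (nu Z (powerDiagram Z Dg (S.B a)) i f) = g := hc
    replace this := (hκ i f).symm.trans this
    exact congrArg (Sigma.mk a) this
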